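/- Let m ∈ ℝ and let G : ℝ → [0,∞) be a measurable function that is monotone nondecreasing on [m, ∞). Then for all 0 < s₁ ≤ s₂, ∫_m^∞ G(x)·φ(x; m, s₁²) dx ≤ ∫_m^∞ G(x)·φ(x; m, s₂²) dx, where φ(x; m, s²) = (2πs²)^(−1/2)·exp(−(x−m)²/(2s²)) is the normal density with mean m and variance s². (This is the step allowing the variance of the Laplace approximation to be replaced by the upper bound μ̂²/(2k) in the total variation bound of Appendix D.) -/

import Mathlib

open MeasureTheory Real

/-- The density of the normal distribution with mean `μ` and variance `s2`:
`φ(x; μ, s²) = (2πs²)^(−1/2)·exp(−(x−μ)²/(2s²))`. -/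
noncomputable def normalPDF (μ s2 x : ℝ) : ℝ :=
  (2 * Real.pi * s2) ^ (-(1:ℝ)/2) * Real.exp (-(x - μ) ^ 2 / (2 * s2))

lemma normalPDF_measurable (μ s2 : ℝ) : Measurable (normalPDF μ s2) := by
  unfold normalPDF; fun_prop

lemma key_change (m s : ℝ) (hs : 0 < s) (G : ℝ → ℝ) (hG : Measurable G) :
    ∫⁻ x in Set.Ioi m, ENNReal.ofReal (G x * normalPDF m (s ^ 2) x) =
    ∫⁻ u in Set.Ioi 0,
      ENNReal.ofReal (G (m + s * u) * ((2 * Real.pi) ^ (-(1:ℝ)/2) * Real.exp (-u ^ 2 / 2))) := by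
  set T : ℝ → ℝ := fun u => m + s * u with hT
  have hTmeas : Measurable T := by fun_prop
  have hmap : Measure.map T volume = ENNReal.ofReal s⁻¹ • volume := by
    have : T = (fun x => m + x) ∘ (fun u => s * u) := rfl
    rw [this, ← Measure.map_map (by fun_prop) (by fun_prop),
      Real.map_volume_mul_left (ne_of_gt hs), Measure.map_smul,
      map_add_left_eq_self volume m, abs_of_pos (inv_pos.mpr hs)]
  set f : ℝ → ENNReal := fun x => ENNReal.ofReal (G x * normalPDF m (s ^ 2) x) with hf
  have hfm : Measurable f := by
    apply Measurable.ennreal_ofReal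
    exact hG.mul (normalPDF_measurable _ _)
  have hind : Measurable ((Set.Ioi m).indicator f) :=
    hfm.indicator measurableSet_Ioi
  have hA : ∫⁻ x, (Set.Ioi m).indicator f x ∂(Measure.map T volume)
      = ENNReal.ofReal s⁻¹ * ∫⁻ x in Set.Ioi m, f x := by
    rw [hmap, lintegral_smul_measure, lintegral_indicator measurableSet_Ioi, smul_eq_mul]
  have hcomp : ∀ u : ℝ, (Set.Ioi m).indicator f (T u)
      = (Set.Ioi 0).indicator (fun u => f (T u)) u := by
    intro u
    have : T u ∈ Set.Ioi m ↔ u ∈ Set.Ioi 0 := by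
      simp only [Set.mem_Ioi, hT]
      constructor
      · intro h; nlinarith
      · intro h; nlinarith
    by_cases hu : u ∈ Set.Ioi 0
    · rw [Set.indicator_of_mem hu, Set.indicator_of_mem (this.mpr hu)]
    · rw [Set.indicator_of_notMem hu, Set.indicator_of_notMem (fun h => hu (this.mp h))]
  have hval : ∀ u : ℝ, 0 < u → f (T u)
      = ENNReal.ofReal s⁻¹ *
        ENNReal.ofReal (G (m + s * u) * ((2 * Real.pi) ^ (-(1:ℝ)/2) * Real.exp (-u ^ 2 / 2))) := by
    intro u hu
    have hs2 : (0:ℝ) < s ^ 2 := by positivity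
    have hpdf : normalPDF m (s ^ 2) (T u)
        = s⁻¹ * ((2 * Real.pi) ^ (-(1:ℝ)/2) * Real.exp (-u ^ 2 / 2)) := by
      unfold normalPDF
      have h1 : (2 * Real.pi * s ^ 2) ^ (-(1:ℝ)/2)
          = (2 * Real.pi) ^ (-(1:ℝ)/2) * s⁻¹ := by
        rw [Real.mul_rpow (by positivity) (by positivity)]
        congr 1
        rw [← Real.rpow_natCast s 2, ← Real.rpow_mul hs.le]
        norm_num
        rw [Real.rpow_neg_one]
      have h2 : -(T u - m) ^ 2 / (2 * s ^ 2) = -u ^ 2 / 2 := by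
        simp only [hT]
        field_simp
        ring
      rw [h1, h2]; ring
    rw [hf]
    simp only [hpdf]
    rw [show G (T u) * (s⁻¹ * ((2 * Real.pi) ^ (-(1:ℝ)/2) * Real.exp (-u ^ 2 / 2)))
        = s⁻¹ * (G (m + s * u) * ((2 * Real.pi) ^ (-(1:ℝ)/2) * Real.exp (-u ^ 2 / 2))) by
      simp only [hT]; ring]
    rw [ENNReal.ofReal_mul (by positivity)]
  have hB : ∫⁻ x, (Set.Ioi m).indicator f x ∂(Measure.map T volume)
      = ENNReal.ofReal s⁻¹ * ∫⁻ u in Set.Ioi 0,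
        ENNReal.ofReal (G (m + s * u) * ((2 * Real.pi) ^ (-(1:ℝ)/2) * Real.exp (-u ^ 2 / 2))) := by
    rw [lintegral_map hind hTmeas]
    simp_rw [hcomp]
    rw [lintegral_indicator measurableSet_Ioi]
    rw [← lintegral_const_mul' _ _ (by simp)]
    apply setLIntegral_congr_fun measurableSet_Ioi
    intro u hu
    exact hval u hu
  have hne : (ENNReal.ofReal s⁻¹ : ENNReal) ≠ 0 :=
    ne_of_gt (ENNReal.ofReal_pos.mpr (inv_pos.mpr hs))
  have := hA.symm.trans hB
  exact (ENNReal.mul_right_inj hne (by simp)).mp this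

/-- If `G ≥ 0` is measurable and monotone nondecreasing on `[m, ∞)`, then for
`0 < s₁ ≤ s₂`, `∫_m^∞ G(x)·φ(x; m, s₁²) dx ≤ ∫_m^∞ G(x)·φ(x; m, s₂²) dx`
(as an inequality of extended-real-valued Lebesgue integrals). -/
theorem stmt13 (m : ℝ) (G : ℝ → ℝ) (hG : Measurable G) (hG0 : ∀ x, 0 ≤ G x)
    (hGmono : MonotoneOn G (Set.Ici m)) (s₁ s₂ : ℝ) (h1 : 0 < s₁) (h12 : s₁ ≤ s₂) :
    ∫⁻ x in Set.Ioi m, ENNReal.ofReal (G x * normalPDF m (s₁ ^ 2) x) ≤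
      ∫⁻ x in Set.Ioi m, ENNReal.ofReal (G x * normalPDF m (s₂ ^ 2) x) := by
  rw [key_change m s₁ h1 G hG, key_change m s₂ (h1.trans_le h12) G hG]
  apply lintegral_mono_ae
  filter_upwards [self_mem_ae_restrict measurableSet_Ioi] with u hu
  have hu0 : 0 < u := hu
  apply ENNReal.ofReal_le_ofReal
  apply mul_le_mul_of_nonneg_right _ (by positivity)
  apply hGmono
  · simp only [Set.mem_Ici]; nlinarith
  · simp only [Set.mem_Ici]; nlinarith
  · nlinarith
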